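/- Let (Ω, μ) be a probability space, 𝒳 a measurable space, and let (Xᵢ)_{i≥1}, (Yᵢ)_{i≥1} : Ω → 𝒳 be sequences such that the pairs (Xᵢ, Yᵢ) are i.i.d., with X₁ distributed as P and Y₁ distributed as Q. Let f : 𝒳 → ℝ be measurable with |f(x)| ≤ 1 for all x, let τ ∈ [0, √2], and suppose m := ∫ f dP − ∫ f dQ > τ. Set Δ := m − τ. Then there exists λ ∈ [0, 1/(8+4τ)] such that, defining K_t(λ) = ∏_{i=1}^{t} (1 + λ·(f(Xᵢ) − f(Yᵢ) − τ)), for μ-almost every ω we have liminf_{t→∞} (log K_t(λ)(ω))/t ≥ Δ²/768. In particular, under the alternative hypothesis the wealth process grows exponentially at rate Ω(Δ²) almost surely. -/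

import Mathlib

open MeasureTheory ProbabilityTheory Filter

private lemma log_ge_aux {x : ℝ} (hx : -(1/2) ≤ x) :
    x - 2 * x ^ 2 ≤ Real.log (1 + x) := by
  have h1 : (0:ℝ) < 1 + x := by linarith
  have h2 := Real.log_le_sub_one_of_pos (inv_pos.2 h1)
  rw [Real.log_inv] at h2
  have h3 : 1 - (1+x)⁻¹ ≤ Real.log (1+x) := by linarith
  have h4 : x/(1+x) = 1 - (1+x)⁻¹ := by field_simp; ring
  have h5 : x - 2 * x ^ 2 ≤ x/(1+x) := by
    rw [le_div_iff₀ h1]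
    nlinarith [mul_nonneg (sq_nonneg x) (show (0:ℝ) ≤ 1 + 2*x by linarith)]
  linarith

/-- Growth of the abstract wealth process under the alternative: if
`m = ∫ f dP − ∫ f dQ > τ` with gap `Δ = m − τ`, then there is a bet size
`λ ∈ [0, 1/(8+4τ)]` for which `log K_t(λ)/t` has liminf at least `Δ²/768` almost
surely, i.e. the wealth grows exponentially at rate `Ω(Δ²)`. -/
theorem abstract_test_growth_under_alternative
    {Ω : Type*} [MeasurableSpace Ω] (μ : Measure Ω) [IsProbabilityMeasure μ]
    {𝒳 : Type*} [MeasurableSpace 𝒳]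
    (X Y : ℕ → Ω → 𝒳) (hX : ∀ i, Measurable (X i)) (hY : ∀ i, Measurable (Y i))
    (hindep : iIndepFun
      (fun i ω => (X i ω, Y i ω)) μ)
    (hident : ∀ i, IdentDistrib (fun ω => (X i ω, Y i ω))
      (fun ω => (X 0 ω, Y 0 ω)) μ μ)
    (P Q : Measure 𝒳)
    (hP : μ.map (X 0) = P) (hQ : μ.map (Y 0) = Q)
    (f : 𝒳 → ℝ) (hf : Measurable f) (hf1 : ∀ x, |f x| ≤ 1)
    (τ : ℝ) (hτ0 : 0 ≤ τ) (hτ2 : τ ≤ Real.sqrt 2)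
    (m Δ : ℝ) (hm : m = (∫ x, f x ∂P) - ∫ x, f x ∂Q) (halt : τ < m)
    (hΔ : Δ = m - τ) :
    ∃ lam : ℝ, lam ∈ Set.Icc 0 (1 / (8 + 4 * τ)) ∧
      ∀ᵐ ω ∂μ,
        Δ ^ 2 / 768 ≤
          liminf (fun t : ℕ =>
            Real.log (∏ i ∈ Finset.range t,
              (1 + lam * (f (X i ω) - f (Y i ω) - τ))) / t) atTop := by
  -- basic bounds
  have hτ32 : τ ≤ 3/2 := by
    have h2 := Real.sq_sqrt (by norm_num : (0:ℝ) ≤ 2)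
    nlinarith [Real.sqrt_nonneg 2]
  obtain ⟨c, hc⟩ : ∃ c : ℝ, c = 2 + τ := ⟨_, rfl⟩
  have hc0 : (0:ℝ) < c := by rw [hc]; linarith
  have hcc : c ≤ 7/2 := by rw [hc]; linarith
  -- m ≤ 2, so Δ ≤ 2
  have hfX0 : ∫ x, f x ∂P = ∫ ω, f (X 0 ω) ∂μ := by
    rw [← hP, integral_map (hX 0).aemeasurable hf.aestronglyMeasurable]
  have hfY0 : ∫ x, f x ∂Q = ∫ ω, f (Y 0 ω) ∂μ := by
    rw [← hQ, integral_map (hY 0).aemeasurable hf.aestronglyMeasurable]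
  have hfXint : Integrable (fun ω => f (X 0 ω)) μ :=
    (integrable_const (1:ℝ)).mono' (hf.comp (hX 0)).aestronglyMeasurable
      (ae_of_all _ fun ω => by simpa [Real.norm_eq_abs] using hf1 (X 0 ω))
  have hfYint : Integrable (fun ω => f (Y 0 ω)) μ :=
    (integrable_const (1:ℝ)).mono' (hf.comp (hY 0)).aestronglyMeasurable
      (ae_of_all _ fun ω => by simpa [Real.norm_eq_abs] using hf1 (Y 0 ω))
  have habsP : |∫ x, f x ∂P| ≤ 1 := by
    rw [hfX0]
    calc |∫ ω, f (X 0 ω) ∂μ| ≤ ∫ ω, |f (X 0 ω)| ∂μ := by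
          simpa [Real.norm_eq_abs] using
            norm_integral_le_integral_norm (μ := μ) (fun ω => f (X 0 ω))
      _ ≤ ∫ _ω, (1:ℝ) ∂μ :=
          integral_mono hfXint.abs (integrable_const 1) (fun ω => hf1 _)
      _ = 1 := by simp
  have habsQ : |∫ x, f x ∂Q| ≤ 1 := by
    rw [hfY0]
    calc |∫ ω, f (Y 0 ω) ∂μ| ≤ ∫ ω, |f (Y 0 ω)| ∂μ := by
          simpa [Real.norm_eq_abs] using
            norm_integral_le_integral_norm (μ := μ) (fun ω => f (Y 0 ω))
      _ ≤ ∫ _ω, (1:ℝ) ∂μ :=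
          integral_mono hfYint.abs (integrable_const 1) (fun ω => hf1 _)
      _ = 1 := by simp
  have hm2 : m ≤ 2 := by
    rw [hm]
    have := abs_le.1 habsP; have := abs_le.1 habsQ
    obtain ⟨h1, h2⟩ := abs_le.1 habsP
    obtain ⟨h3, h4⟩ := abs_le.1 habsQ
    linarith
  have hΔ0 : 0 < Δ := by rw [hΔ]; linarith
  have hΔ2 : Δ ≤ 2 := by rw [hΔ]; linarith
  -- choose lam
  obtain ⟨lam, hlam⟩ : ∃ lam : ℝ, lam = min (Δ / (4 * c ^ 2)) (1 / (4 * c)) :=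
    ⟨_, rfl⟩
  have hlam0 : 0 ≤ lam := hlam ▸ le_min (by positivity) (by positivity)
  have hlamcap : lam ≤ 1 / (4 * c) := hlam ▸ min_le_right _ _
  have hlamΔ : lam ≤ Δ / (4 * c ^ 2) := hlam ▸ min_le_left _ _
  have hlamc : lam * c ≤ 1/4 := by
    calc lam * c ≤ 1 / (4 * c) * c := mul_le_mul_of_nonneg_right hlamcap hc0.le
      _ = 1/4 := by field_simp
  have hlamlb : Δ / 384 ≤ lam := by
    rw [hlam]
    refine le_min ?_ ?_
    · rw [div_le_div_iff₀ (by norm_num) (by positivity)]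
      have h4 : 4 * c ^ 2 ≤ 384 := by nlinarith
      nlinarith [mul_le_mul_of_nonneg_left h4 hΔ0.le]
    · rw [div_le_div_iff₀ (by norm_num) (by positivity)]
      nlinarith [mul_nonneg hΔ0.le hc0.le]
  have hcap' : lam ≤ 1 / (8 + 4 * τ) := by
    rw [show (8:ℝ) + 4 * τ = 4 * c by rw [hc]; ring]
    exact hlamcap
  refine ⟨lam, ⟨hlam0, hcap'⟩, ?_⟩
  -- the increments
  obtain ⟨Z, hZ⟩ : ∃ Z : ℕ → Ω → ℝ, Z = fun i ω => f (X i ω) - f (Y i ω) - τ :=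
    ⟨_, rfl⟩
  have hZbound : ∀ i ω, |Z i ω| ≤ c := by
    intro i ω
    obtain ⟨h1, h2⟩ := abs_le.1 (hf1 (X i ω))
    obtain ⟨h3, h4⟩ := abs_le.1 (hf1 (Y i ω))
    rw [abs_le, hZ, hc]
    constructor
    · simp only; linarith
    · simp only; linarith
  have hZm : ∀ i, Measurable (Z i) := by
    intro i; rw [hZ]
    exact ((hf.comp (hX i)).sub (hf.comp (hY i))).sub measurable_const
  have hlamZ : ∀ i ω, |lam * Z i ω| ≤ 1/4 := by
    intro i ω
    rw [abs_mul, abs_of_nonneg hlam0]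
    calc lam * |Z i ω| ≤ lam * c := mul_le_mul_of_nonneg_left (hZbound i ω) hlam0
      _ ≤ 1/4 := hlamc
  have hpos : ∀ i ω, (0:ℝ) < 1 + lam * Z i ω := by
    intro i ω; obtain ⟨h1, h2⟩ := abs_le.1 (hlamZ i ω); linarith
  obtain ⟨g, hg⟩ : ∃ g : ℕ → Ω → ℝ, g = fun i ω => Real.log (1 + lam * Z i ω) :=
    ⟨_, rfl⟩
  -- measurability
  obtain ⟨φ, hφ⟩ : ∃ φ : 𝒳 × 𝒳 → ℝ,
      φ = fun p => Real.log (1 + lam * (f p.1 - f p.2 - τ)) := ⟨_, rfl⟩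
  have hφm : Measurable φ := by
    rw [hφ]
    exact Real.measurable_log.comp (measurable_const.add (measurable_const.mul
      (((hf.comp measurable_fst).sub (hf.comp measurable_snd)).sub measurable_const)))
  have hgφ : ∀ i, g i = φ ∘ (fun ω => (X i ω, Y i ω)) := by
    intro i; funext ω
    simp only [hg, hφ, hZ, Function.comp]
  have hgm : ∀ i, Measurable (g i) := by
    intro i; rw [hgφ i]
    exact hφm.comp ((hX i).prodMk (hY i))
  -- bound on g
  have hgbound : ∀ i ω, |g i ω| ≤ 1 := by
    intro i ω
    obtain ⟨hb1, hb2⟩ := abs_le.1 (hlamZ i ω)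
    have h1 : (0:ℝ) < 1 + lam * Z i ω := hpos i ω
    rw [hg, abs_le]
    simp only
    constructor
    · have h2 := Real.log_le_sub_one_of_pos (inv_pos.2 h1)
      rw [Real.log_inv] at h2
      have h3 : (1 + lam * Z i ω)⁻¹ ≤ (3/4 : ℝ)⁻¹ := by
        apply inv_anti₀ (by norm_num); linarith
      have h4 : (3/4 : ℝ)⁻¹ = 4/3 := by norm_num
      rw [h4] at h3
      linarith
    · have h2 := Real.log_le_sub_one_of_pos h1
      linarith
  have hgint : Integrable (g 0) μ :=
    (integrable_const (1:ℝ)).mono' (hgm 0).aestronglyMeasurable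
      (ae_of_all _ fun ω => by simpa [Real.norm_eq_abs] using hgbound 0 ω)
  -- independence and identical distribution
  have hgindep : Pairwise (Function.onFun (IndepFun · · μ) g) := by
    intro i j hij
    have h := (hindep.indepFun hij).comp hφm hφm
    simp only [Function.onFun]
    rw [hgφ i, hgφ j]
    exact h
  have hgident : ∀ i, IdentDistrib (g i) (g 0) μ μ := by
    intro i
    have h := (hident i).comp hφm
    rw [hgφ i, hgφ 0]
    exact h
  -- integrability of increments
  have hZ0int : Integrable (Z 0) μ :=
    (integrable_const c).mono' (hZm 0).aestronglyMeasurable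
      (ae_of_all _ fun ω => by simpa [Real.norm_eq_abs] using hZbound 0 ω)
  have hZ0sqint : Integrable (fun ω => Z 0 ω ^ 2) μ := by
    refine (integrable_const (c^2)).mono'
      ((hZm 0).pow_const 2).aestronglyMeasurable (ae_of_all _ fun ω => ?_)
    simp only [Real.norm_eq_abs]
    calc |Z 0 ω ^ 2| = |Z 0 ω| ^ 2 := by rw [abs_pow]
      _ ≤ c ^ 2 := pow_le_pow_left₀ (abs_nonneg _) (hZbound 0 ω) 2
  have hEZ : ∫ ω, Z 0 ω ∂μ = Δ := by
    have hsub : Integrable (fun ω => f (X 0 ω) - f (Y 0 ω)) μ := hfXint.sub hfYint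
    have e0 : ∫ ω, Z 0 ω ∂μ = ∫ ω, (f (X 0 ω) - f (Y 0 ω)) - τ ∂μ := by rw [hZ]
    have e1 : ∫ ω, (f (X 0 ω) - f (Y 0 ω)) - τ ∂μ
        = (∫ ω, f (X 0 ω) - f (Y 0 ω) ∂μ) - ∫ _ω, τ ∂μ :=
      integral_sub hsub (integrable_const τ)
    rw [e0, e1, integral_sub hfXint hfYint, integral_const]
    simp only [probReal_univ, measure_univ, ENNReal.toReal_one, smul_eq_mul, one_mul]
    rw [hΔ, hm, hfX0, hfY0]
  have hEZsqnn : 0 ≤ ∫ ω, Z 0 ω ^ 2 ∂μ := integral_nonneg fun ω => sq_nonneg _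
  have hEZsq : ∫ ω, Z 0 ω ^ 2 ∂μ ≤ c ^ 2 := by
    calc ∫ ω, Z 0 ω ^ 2 ∂μ ≤ ∫ _ω, c ^ 2 ∂μ := by
          refine integral_mono hZ0sqint (integrable_const _) fun ω => ?_
          calc Z 0 ω ^ 2 = |Z 0 ω| ^ 2 := (sq_abs _).symm
            _ ≤ c ^ 2 := pow_le_pow_left₀ (abs_nonneg _) (hZbound 0 ω) 2
      _ = c ^ 2 := by simp
  have hEg : Δ ^ 2 / 768 ≤ ∫ ω, g 0 ω ∂μ := by
    have hint2 : Integrable (fun ω => 2 * lam ^ 2 * Z 0 ω ^ 2) μ :=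
      hZ0sqint.const_mul _
    have heq2 : (fun ω => 2 * (lam * Z 0 ω) ^ 2)
        = fun ω => 2 * lam ^ 2 * Z 0 ω ^ 2 := by funext ω; ring
    have hmono : ∫ ω, (lam * Z 0 ω - 2 * (lam * Z 0 ω) ^ 2) ∂μ ≤ ∫ ω, g 0 ω ∂μ := by
      refine integral_mono ((hZ0int.const_mul lam).sub (heq2 ▸ hint2)) hgint
        fun ω => ?_
      obtain ⟨h1, h2⟩ := abs_le.1 (hlamZ 0 ω)
      have := log_ge_aux (x := lam * Z 0 ω) (by linarith)
      rw [hg]; simp only; linarith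
    have hval : ∫ ω, (lam * Z 0 ω - 2 * (lam * Z 0 ω) ^ 2) ∂μ
        = lam * Δ - 2 * lam ^ 2 * ∫ ω, Z 0 ω ^ 2 ∂μ := by
      rw [integral_sub (hZ0int.const_mul lam) (heq2 ▸ hint2),
        integral_const_mul, hEZ, heq2, integral_const_mul]
    have h1 : 2 * lam ^ 2 * ∫ ω, Z 0 ω ^ 2 ∂μ ≤ 2 * lam ^ 2 * c ^ 2 :=
      mul_le_mul_of_nonneg_left hEZsq (by positivity)
    have h2 : lam * c ^ 2 ≤ Δ / 4 := by
      calc lam * c ^ 2 ≤ Δ / (4 * c ^ 2) * c ^ 2 :=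
            mul_le_mul_of_nonneg_right hlamΔ (by positivity)
        _ = Δ / 4 := by field_simp
    have h3 : 2 * lam * (lam * c ^ 2) ≤ 2 * lam * (Δ / 4) :=
      mul_le_mul_of_nonneg_left h2 (by positivity)
    have hlow : lam * Δ / 2 ≤ lam * Δ - 2 * lam ^ 2 * ∫ ω, Z 0 ω ^ 2 ∂μ := by
      have h4 : 2 * lam ^ 2 * c ^ 2 = 2 * lam * (lam * c ^ 2) := by ring
      have h5 : 2 * lam * (Δ / 4) = lam * Δ / 2 := by ring
      linarith [h1, h3]
    have hfinal : Δ ^ 2 / 768 ≤ lam * Δ / 2 := by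
      have := mul_le_mul_of_nonneg_right hlamlb hΔ0.le
      calc Δ ^ 2 / 768 = (Δ / 384) * Δ / 2 := by ring
        _ ≤ lam * Δ / 2 := by linarith
    linarith
  -- apply SLLN
  have hslln := strong_law_ae_real g hgint hgindep hgident
  filter_upwards [hslln] with ω hω
  have hfun : (fun t : ℕ =>
      Real.log (∏ i ∈ Finset.range t, (1 + lam * (f (X i ω) - f (Y i ω) - τ))) / t)
      = fun t : ℕ => (∑ i ∈ Finset.range t, g i ω) / t := by
    funext t
    have hlp : Real.log (∏ i ∈ Finset.range t,
        (1 + lam * (f (X i ω) - f (Y i ω) - τ)))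
        = ∑ i ∈ Finset.range t, Real.log (1 + lam * (f (X i ω) - f (Y i ω) - τ)) := by
      refine Real.log_prod (fun i _ => ?_)
      have := hpos i ω
      rw [hZ] at this
      simp only at this
      exact this.ne'
    rw [hlp]
    congr 1
    refine Finset.sum_congr rfl fun i _ => ?_
    rw [hg, hZ]
  rw [hfun, hω.liminf_eq]
  exact hEg
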